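/- Let p be a point sphere complex. Let f^p be a point sphere (isotropic, ⟨f^p,p⟩ = 0) and r an isotropic vector with ⟨f^p,r⟩ = 0, so that f := span{f^p,r} is a contact element with point sphere f^p. Let a ∈ ℝ^{4,2} with ⟨a,a⟩ ≠ 0, ⟨r,a⟩ = 0 and ⟨f^p,a⟩ ≠ 0, and let f̂^p be a nonzero isotropic vector in span{σ_a(f^p), r} with ⟨f̂^p,p⟩ = 0 and f̂^p ∉ span{r} (the point sphere of the Ribaucour transform σ_a(f)). Set γ := span{f^p, f̂^p, r + ⟨r,p⟩p}, the circle of the cyclic circle congruence associated to the Ribaucour pair (f, σ_a(f)). Then for every b ∈ span{a,p} with ⟨b,b⟩ ≠ 0 and every isotropic w ∈ σ_b(span{f^p,r}), the sphere w is orthogonal to the circle γ: ⟨w, v + ⟨v,p⟩p⟩ = 0 for every isotropic v ∈ γ^⊥. In other words, all the Legendre maps σ_b(f), for b in the 2-dimensional space span{a,p}, are orthogonal to the cyclic circle congruence associated to f and σ_a(f). -/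
import Mathlib


noncomputable section

/-- The symmetric bilinear form of signature (4,2) on ℝ⁶, modelling ℝ^{4,2}. -/
def B (x y : Fin 6 → ℝ) : ℝ :=
  x 0 * y 0 + x 1 * y 1 + x 2 * y 2 + x 3 * y 3 - x 4 * y 4 - x 5 * y 5

/-- The Lie inversion with respect to the linear sphere complex `a`. -/
def lieInv (a x : Fin 6 → ℝ) : Fin 6 → ℝ :=
  x - (2 * B x a / B a a) • a

lemma B_symm (x y : Fin 6 → ℝ) : B x y = B y x := by simp [B]; ring

lemma B_add_left (x y z : Fin 6 → ℝ) : B (x + y) z = B x z + B y z := by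
  simp [B, Pi.add_apply]; ring

lemma B_add_right (x y z : Fin 6 → ℝ) : B x (y + z) = B x y + B x z := by
  simp [B, Pi.add_apply]; ring

lemma B_smul_left (c : ℝ) (x z : Fin 6 → ℝ) : B (c • x) z = c * B x z := by
  simp [B, Pi.smul_apply, smul_eq_mul]; ring

lemma B_smul_right (c : ℝ) (x z : Fin 6 → ℝ) : B x (c • z) = c * B x z := by
  simp [B, Pi.smul_apply, smul_eq_mul]; ring

lemma B_sub_left (x y z : Fin 6 → ℝ) : B (x - y) z = B x z - B y z := by
  simp [B, Pi.sub_apply]; ring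

lemma B_lieInv_left (b x z : Fin 6 → ℝ) :
    B (lieInv b x) z = B x z - 2 * B x b / B b b * B b z := by
  rw [lieInv, B_sub_left, B_smul_left]

/-- Let `(f, σ_a(f))` be a Ribaucour pair with `f = span{fp,r}`
enveloping the sphere `r`, and let `γ = span{fp, fq, r + ⟨r,p⟩p}` be the circle
of the associated cyclic circle congruence (`fq` the point sphere of `σ_a(f)`).
Then every sphere of every Legendre map `σ_b(f)`, `b ∈ span{a,p}` with
`⟨b,b⟩ ≠ 0`, is orthogonal to the circle `γ`. -/
theorem stmt_10 (p fp r a : Fin 6 → ℝ) (hp : B p p = -1)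
    (hfp : fp ≠ 0) (ifp : B fp fp = 0) (hfpp : B fp p = 0)
    (hr : r ≠ 0) (ir : B r r = 0) (hfr : B fp r = 0)
    (ha : B a a ≠ 0) (hra : B r a = 0) (hfa : B fp a ≠ 0)
    (fq : Fin 6 → ℝ) (hfq : fq ≠ 0) (ifq : B fq fq = 0) (hfqp : B fq p = 0)
    (hfqmem : fq ∈ Submodule.span ℝ ({lieInv a fp, r} : Set (Fin 6 → ℝ)))
    (hfqr : fq ∉ Submodule.span ℝ ({r} : Set (Fin 6 → ℝ)))
    (γ : Submodule ℝ (Fin 6 → ℝ))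
    (hγ : γ = Submodule.span ℝ ({fp, fq, r + B r p • p} : Set (Fin 6 → ℝ))) :
    ∀ b ∈ Submodule.span ℝ ({a, p} : Set (Fin 6 → ℝ)), B b b ≠ 0 →
      ∀ w : Fin 6 → ℝ, w ≠ 0 → B w w = 0 →
        w ∈ Submodule.span ℝ ({lieInv b fp, lieInv b r} : Set (Fin 6 → ℝ)) →
        ∀ v : Fin 6 → ℝ, v ≠ 0 → B v v = 0 → (∀ x ∈ γ, B v x = 0) →
          B w (v + B v p • p) = 0 := by
  intro b hb hbb w hw hww hwmem v hv hvv hvγ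
  subst hγ
  obtain ⟨c, d, hcd⟩ := Submodule.mem_span_pair.mp hfqmem
  obtain ⟨α, β, hab⟩ := Submodule.mem_span_pair.mp hb
  obtain ⟨s, t, hst⟩ := Submodule.mem_span_pair.mp hwmem
  have hc : c ≠ 0 := by
    intro h
    exact hfqr (Submodule.mem_span_singleton.mpr
      ⟨d, by rw [← hcd, h, zero_smul, zero_add]⟩)
  have hv1 : B v fp = 0 := hvγ fp (Submodule.subset_span (by simp))
  have hv2 : B v fq = 0 := hvγ fq (Submodule.subset_span (by simp))
  have hv3 : B v (r + B r p • p) = 0 := hvγ _ (Submodule.subset_span (by simp))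
  have hvr : B v r + B r p * B v p = 0 := by
    rw [B_add_right, B_smul_right] at hv3; linarith
  -- expand the condition ⟨v, fq⟩ = 0
  have hfpv : B fp v = 0 := by rw [B_symm]; exact hv1
  have hE1 : c * (0 - 2 * B fp a / B a a * B a v) + d * B r v = 0 := by
    rw [← hcd, B_add_right, B_smul_right, B_smul_right, B_symm v (lieInv a fp),
      B_lieInv_left, B_symm v r, hfpv] at hv2
    linarith
  -- expand the condition ⟨fq, p⟩ = 0
  have hE2 : c * (0 - 2 * B fp a / B a a * B a p) + d * B r p = 0 := by
    rw [← hcd, B_add_left, B_smul_left, B_smul_left, B_lieInv_left a fp p,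
      hfpp] at hfqp
    linarith
  have hk2 : 2 * B fp a / B a a ≠ 0 := div_ne_zero (mul_ne_zero two_ne_zero hfa) ha
  have hrv : B r v = B v r := B_symm r v
  have hav : B a v = B v a := B_symm a v
  have key : c * (2 * B fp a / B a a) * (B v a + B v p * B a p) = 0 := by
    rw [← hav]
    linear_combination (-1 : ℝ) * hE1 - B v p * hE2 + d * hvr + d * hrv
  have hav' : B a v + B v p * B a p = 0 := by
    have := mul_eq_zero.mp key
    rcases this with h | h
    · rcases mul_eq_zero.mp h with h' | h'
      · exact absurd h' hc
      · exact absurd h' hk2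
    · rw [hav]; exact h
  -- the auxiliary vector v' = v + ⟨v,p⟩ p is orthogonal to fp, r, p, a, hence to b
  have hfpv' : B fp (v + B v p • p) = 0 := by
    rw [B_add_right, B_smul_right, hfpv, hfpp]
    · ring
  have hrv' : B r (v + B v p • p) = 0 := by
    rw [B_add_right, B_smul_right, hrv]
    linarith [B_symm r p, hvr]
  have hpv' : B p (v + B v p • p) = 0 := by
    rw [B_add_right, B_smul_right, hp, B_symm p v]; ring
  have hav'2 : B a (v + B v p • p) = 0 := by
    rw [B_add_right, B_smul_right]
    linarith [hav']
  have hbv' : B b (v + B v p • p) = 0 := by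
    rw [← hab, B_add_left, B_smul_left, B_smul_left, hav'2, hpv']; ring
  rw [← hst, B_add_left, B_smul_left, B_smul_left, B_lieInv_left, B_lieInv_left,
    hfpv', hrv', hbv']
  ring
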